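/- Let (y_k) be a deterministic sequence of reals whose empirical distributions converge weakly to a measure ν. If (w_k) is obtained from (y_k) by deleting a finite set of indices and permuting the remainder such that each w_n equals y_{σ(n)} for an injection σ with |σ(n) − n| uniformly bounded, then the empirical distributions of (w_k) also converge weakly to ν. -/

import Mathlib

open MeasureTheory Filter

/-- If the empirical distributions of a deterministic real sequence `(y k)` converge weakly to
`ν`, and `(w k)` is obtained from `(y k)` by deleting a finite set of indices and permuting the
remainder via an injection `σ` with uniformly bounded displacement (`|σ n − n| ≤ B`), then the
empirical distributions of `(w k)` also converge weakly to `ν`. -/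
theorem empirical_of_bounded_displacement_reordering
    (ν : Measure ℝ) [IsProbabilityMeasure ν]
    (y w : ℕ → ℝ) (σ : ℕ → ℕ)
    (hσinj : Function.Injective σ)
    (hfin : (Set.range σ)ᶜ.Finite)
    (hw : ∀ n, w n = y (σ n))
    (B : ℕ) (hdisp : ∀ n, |(σ n : ℤ) - (n : ℤ)| ≤ B)
    (hy : ∀ f : BoundedContinuousFunction ℝ ℝ,
      Tendsto (fun n : ℕ => (∑ k ∈ Finset.range n, f (y k)) / n)
        atTop (nhds (∫ x, f x ∂ν))) :
    ∀ f : BoundedContinuousFunction ℝ ℝ,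
      Tendsto (fun n : ℕ => (∑ k ∈ Finset.range n, f (w k)) / n)
        atTop (nhds (∫ x, f x ∂ν)) := by
  intro f
  set C : ℝ := ‖f‖ with hC
  set m : ℕ := hfin.toFinset.card with hm
  have hCnn : 0 ≤ C := norm_nonneg f
  -- key quantitative bound on the difference of partial sums
  have hbound : ∀ n : ℕ,
      |(∑ k ∈ Finset.range n, f (w k)) - (∑ k ∈ Finset.range n, f (y k))|
        ≤ ((2 * B + m : ℕ) : ℝ) * C := by
    intro n
    set A : Finset ℕ := (Finset.range n).image σ with hA
    have hT : (∑ k ∈ Finset.range n, f (w k)) = ∑ j ∈ A, f (y j) := by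
      rw [hA, Finset.sum_image (fun a _ b _ h => hσinj h)]
      exact Finset.sum_congr rfl fun k _ => by rw [hw]
    have key : (∑ j ∈ A, f (y j)) - (∑ j ∈ Finset.range n, f (y j))
        = (∑ j ∈ A \ Finset.range n, f (y j))
          - (∑ j ∈ Finset.range n \ A, f (y j)) := by
      have h1 := Finset.sum_inter_add_sum_sdiff A (Finset.range n) (fun j => f (y j))
      have h2 := Finset.sum_inter_add_sum_sdiff (Finset.range n) A (fun j => f (y j))
      rw [Finset.inter_comm] at h2
      linarith
    have habs : ∀ (s : Finset ℕ), |∑ j ∈ s, f (y j)| ≤ (s.card : ℝ) * C := by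
      intro s
      calc |∑ j ∈ s, f (y j)| ≤ ∑ j ∈ s, |f (y j)| := Finset.abs_sum_le_sum_abs _ _
        _ ≤ ∑ _j ∈ s, C := Finset.sum_le_sum fun j _ => by
              simpa [Real.norm_eq_abs] using f.norm_coe_le_norm (y j)
        _ = (s.card : ℝ) * C := by rw [Finset.sum_const, nsmul_eq_mul]
    have hc1 : (A \ Finset.range n).card ≤ B := by
      have hsub : A \ Finset.range n ⊆ Finset.Ico n (n + B) := by
        intro j hj
        rw [Finset.mem_sdiff] at hj
        obtain ⟨hjA, hjB⟩ := hj
        rw [hA, Finset.mem_image] at hjA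
        obtain ⟨k, hk, rfl⟩ := hjA
        rw [Finset.mem_range] at hk
        rw [Finset.mem_range] at hjB
        have := hdisp k
        rw [abs_le] at this
        rw [Finset.mem_Ico]
        omega
      calc (A \ Finset.range n).card ≤ (Finset.Ico n (n + B)).card :=
            Finset.card_le_card hsub
        _ = B := by rw [Nat.card_Ico]; omega
    have hc2 : (Finset.range n \ A).card ≤ B + m := by
      have hsub : Finset.range n \ A ⊆ Finset.Ico (n - B) n ∪ hfin.toFinset := by
        intro j hj
        rw [Finset.mem_sdiff, Finset.mem_range] at hj
        obtain ⟨hjn, hjA⟩ := hj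
        rw [Finset.mem_union]
        by_cases hjr : j ∈ Set.range σ
        · obtain ⟨k, rfl⟩ := hjr
          have hk : n ≤ k := by
            by_contra hkn
            exact hjA (Finset.mem_image_of_mem σ (Finset.mem_range.mpr (by omega)))
          have := hdisp k
          rw [abs_le] at this
          left
          rw [Finset.mem_Ico]
          omega
        · right
          rw [Set.Finite.mem_toFinset]
          exact hjr
      calc (Finset.range n \ A).card
          ≤ (Finset.Ico (n - B) n ∪ hfin.toFinset).card := Finset.card_le_card hsub
        _ ≤ (Finset.Ico (n - B) n).card + hfin.toFinset.card := Finset.card_union_le _ _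
        _ ≤ B + m := by rw [Nat.card_Ico]; omega
    rw [hT, key]
    have b1 := (habs (A \ Finset.range n)).trans
      (mul_le_mul_of_nonneg_right (Nat.cast_le.mpr hc1 : ((A \ Finset.range n).card : ℝ) ≤ (B : ℝ)) hCnn)
    have b2 := (habs (Finset.range n \ A)).trans
      (mul_le_mul_of_nonneg_right (Nat.cast_le.mpr hc2 : ((Finset.range n \ A).card : ℝ) ≤ ((B + m : ℕ) : ℝ)) hCnn)
    have := abs_sub (∑ j ∈ A \ Finset.range n, f (y j)) (∑ j ∈ Finset.range n \ A, f (y j))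
    calc |(∑ j ∈ A \ Finset.range n, f (y j)) - (∑ j ∈ Finset.range n \ A, f (y j))|
        ≤ |∑ j ∈ A \ Finset.range n, f (y j)| + |∑ j ∈ Finset.range n \ A, f (y j)| :=
          abs_sub _ _
      _ ≤ (B : ℝ) * C + ((B + m : ℕ) : ℝ) * C := add_le_add b1 b2
      _ = ((2 * B + m : ℕ) : ℝ) * C := by push_cast; ring
  -- the rescaled difference tends to 0
  have hD : Tendsto (fun n : ℕ =>
      ((∑ k ∈ Finset.range n, f (w k)) - (∑ k ∈ Finset.range n, f (y k))) / n)
      atTop (nhds 0) := by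
    refine squeeze_zero_norm (fun n => ?_)
      (tendsto_const_div_atTop_nhds_zero_nat (((2 * B + m : ℕ) : ℝ) * C))
    rcases Nat.eq_zero_or_pos n with h0 | hpos
    · simp [h0]
    · rw [Real.norm_eq_abs, abs_div, abs_of_nonneg (by positivity : (0:ℝ) ≤ (n:ℝ))]
      gcongr
      exact hbound n
  have h := (hy f).add hD
  rw [add_zero] at h
  refine h.congr fun n => ?_
  rw [← add_div]
  congr 1
  ring
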